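/- For N ≥ 2 Hermitian observables A_1, ..., A_N and a density matrix ρ: ∑_{i=1}^N Δ²_ρ(A_i) ≥ (1/N)·Δ²_ρ(∑_{i=1}^N A_i) + (2/(N²(N−1)))·(∑_{1≤i<j≤N} Δ_ρ(A_i − A_j))² (the Song et al. uncertainty relation, Eq. (5)). -/

import Mathlib

open Finset ComplexOrder

/-- Variance of an observable `M` in the state `ρ`. -/
noncomputable def qvar {d : ℕ} (ρ M : Matrix (Fin d) (Fin d) ℂ) : ℝ :=
  ((ρ * M ^ 2).trace - (ρ * M).trace ^ 2).re

/-- Standard deviation of an observable `M` in the state `ρ`. -/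
noncomputable def qdev {d : ℕ} (ρ M : Matrix (Fin d) (Fin d) ℂ) : ℝ :=
  Real.sqrt (qvar ρ M)

open Matrix in
lemma tr_herm_mul_self_re_nonneg {d : ℕ} (X : Matrix (Fin d) (Fin d) ℂ) :
    0 ≤ ((Xᴴ * X).trace).re := by
  have h : (Xᴴ * X).trace = ∑ j, ∑ k, (starRingEnd ℂ) (X k j) * X k j := by
    simp [Matrix.trace, Matrix.diag, Matrix.mul_apply, Matrix.conjTranspose_apply]
  rw [h]
  simp only [Complex.re_sum]
  refine Finset.sum_nonneg fun j _ => Finset.sum_nonneg fun k _ => ?_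
  rw [mul_comm, Complex.mul_conj]
  rw [Complex.ofReal_re]; exact Complex.normSq_nonneg _

open Matrix in
lemma tr_mul_real {d : ℕ} {ρ M : Matrix (Fin d) (Fin d) ℂ} (hρ : ρ.IsHermitian)
    (hM : M.IsHermitian) : (((ρ*M).trace.re : ℝ) : ℂ) = (ρ*M).trace := by
  rw [← Complex.conj_eq_iff_re]
  calc (starRingEnd ℂ) ((ρ*M).trace) = ((ρ*M)ᴴ).trace := (Matrix.trace_conjTranspose _).symm
    _ = (M*ρ).trace := by rw [Matrix.conjTranspose_mul, hM.eq, hρ.eq]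
    _ = (ρ*M).trace := Matrix.trace_mul_comm _ _

open scoped MatrixOrder in
open Matrix in
lemma qvar_nonneg {d : ℕ} {ρ M : Matrix (Fin d) (Fin d) ℂ} (hρ : ρ.PosSemidef)
    (hρ1 : ρ.trace = 1) (hM : M.IsHermitian) : 0 ≤ qvar ρ M := by
  set t : ℂ := (ρ * M).trace with ht
  have htr : ((t.re : ℝ) : ℂ) = t := tr_mul_real hρ.1 hM
  set c : ℂ := ((t.re : ℝ) : ℂ) with hc
  set B : Matrix (Fin d) (Fin d) ℂ := M - c • (1 : Matrix (Fin d) (Fin d) ℂ) with hB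
  have hBh : Bᴴ = B := by
    rw [hB, Matrix.conjTranspose_sub, hM.eq, Matrix.conjTranspose_smul,
      Matrix.conjTranspose_one]
    simp [hc, Complex.conj_ofReal]
  have expand : B * B = M * M - c • M - c • M + (c*c) • (1 : Matrix (Fin d) (Fin d) ℂ) := by
    simp only [hB, sub_mul, mul_sub, smul_mul_assoc, mul_smul_comm, one_mul, mul_one,
      smul_smul, smul_sub]
    module
  have trB : (ρ * (B*B)).trace = (ρ * (M*M)).trace - t^2 := by
    rw [expand]
    simp only [Matrix.mul_sub, Matrix.mul_add, Matrix.mul_smul, Matrix.trace_sub,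
      Matrix.trace_add, Matrix.trace_smul, Matrix.mul_one, hρ1, smul_eq_mul, mul_one, ← ht, htr]
    ring
  have key : qvar ρ M = ((ρ * (B*B)).trace).re := by
    rw [qvar, trB, pow_two, ← ht]
  rw [key]
  have e : (((CFC.sqrt ρ) * B)ᴴ) * ((CFC.sqrt ρ) * B) = B * (ρ * B) := by
    rw [Matrix.conjTranspose_mul, hBh, (CFC.sqrt_nonneg ρ).posSemidef.1.eq, Matrix.mul_assoc,
      ← Matrix.mul_assoc (CFC.sqrt ρ), CFC.sqrt_mul_sqrt_self ρ hρ.nonneg]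
  have h1 : (ρ * (B * B)).trace = ((((CFC.sqrt ρ) * B)ᴴ) * ((CFC.sqrt ρ) * B)).trace := by
    rw [e, Matrix.trace_mul_comm B (ρ*B), Matrix.mul_assoc]
  rw [h1]
  exact tr_herm_mul_self_re_nonneg _

lemma pair_sum_eq {N : ℕ} (c : Fin N → Fin N → ℂ) :
    ∑ i, ∑ j ∈ univ.filter (fun j => i < j), (c i i + c j j - c i j - c j i)
      = (N : ℂ) * (∑ i, c i i) - ∑ i, ∑ j, c i j := by
  set X : Fin N → Fin N → ℂ := fun i j => c i i + c j j - c i j - c j i with hX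
  have hXsymm : ∀ i j, X j i = X i j := by intro i j; simp only [hX]; ring
  have hXdiag : ∀ i, X i i = 0 := by intro i; simp only [hX]; ring
  have h1 : ∑ i, ∑ j ∈ univ.filter (fun j => i < j), X i j
      = ∑ i, ∑ j, if i < j then X i j else 0 := by
    simp [Finset.sum_filter]
  have h2 : ∑ i, ∑ j, (if i < j then X i j else 0) = ∑ i, ∑ j, (if j < i then X i j else 0) := by
    rw [Finset.sum_comm]
    refine Finset.sum_congr rfl fun j _ => Finset.sum_congr rfl fun i _ => ?_
    simp [hXsymm]
  have h3 : ∀ i j : Fin N, (if i < j then X i j else 0) + (if j < i then X i j else 0)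
      = X i j - (if i = j then X i j else 0) := by
    intro i j
    rcases lt_trichotomy i j with h | h | h
    · simp [h, not_lt_of_gt h, h.ne]
    · simp [h, lt_irrefl]
    · simp [h, not_lt_of_gt h, (ne_of_lt h).symm]
  have h4 : (2 : ℂ) * (∑ i, ∑ j, if i < j then X i j else 0)
      = ∑ i, ∑ j, X i j := by
    have : (∑ i, ∑ j, if i < j then X i j else 0) + (∑ i, ∑ j, if j < i then X i j else 0)
        = ∑ i, ∑ j, (X i j - if i = j then X i j else 0) := by
      rw [← Finset.sum_add_distrib]
      refine Finset.sum_congr rfl fun i _ => ?_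
      rw [← Finset.sum_add_distrib]
      exact Finset.sum_congr rfl fun j _ => h3 i j
    rw [two_mul]
    nth_rewrite 2 [h2]
    rw [this]
    refine Finset.sum_congr rfl fun i _ => ?_
    rw [Finset.sum_sub_distrib, Finset.sum_ite_eq univ i (fun j => X i j)]
    simp [hXdiag]
  have h5 : ∑ i, ∑ j, X i j = (2 : ℂ) * ((N : ℂ) * (∑ i, c i i) - ∑ i, ∑ j, c i j) := by
    simp only [hX]
    have e1 : ∀ i : Fin N, ∑ j : Fin N, (c i i + c j j - c i j - c j i)
        = (N : ℂ) * c i i + (∑ j, c j j) - (∑ j, c i j) - (∑ j, c j i) := by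
      intro i
      rw [show ∀ f g h k : Fin N → ℂ, (∑ j, (f j + g j - h j - k j))
          = (∑ j, f j) + (∑ j, g j) - (∑ j, h j) - (∑ j, k j) from
        fun f g h k => by rw [Finset.sum_sub_distrib, Finset.sum_sub_distrib,
          Finset.sum_add_distrib]]
      simp [Finset.sum_const, Finset.card_univ, mul_comm]
    rw [Finset.sum_congr rfl fun i _ => e1 i]
    rw [show ∀ f g h k : Fin N → ℂ, (∑ j, (f j + g j - h j - k j))
          = (∑ j, f j) + (∑ j, g j) - (∑ j, h j) - (∑ j, k j) from
        fun f g h k => by rw [Finset.sum_sub_distrib, Finset.sum_sub_distrib,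
          Finset.sum_add_distrib]]
    rw [Finset.sum_comm (f := fun i j => c j i)]
    simp only [Finset.sum_const, Finset.card_univ, Fintype.card_fin, nsmul_eq_mul,
      ← Finset.mul_sum]
    ring
  rw [h1]
  exact mul_left_cancel₀ (two_ne_zero) (h4.trans h5)

open Matrix in
lemma decomposition {d N : ℕ} (ρ : Matrix (Fin d) (Fin d) ℂ)
    (A : Fin N → Matrix (Fin d) (Fin d) ℂ) :
    (N : ℂ) * ∑ i, ((ρ * (A i * A i)).trace - ((ρ * A i).trace)^2)
      = ((ρ * ((∑ i, A i) * (∑ i, A i))).trace - ((ρ * ∑ i, A i).trace)^2)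
        + ∑ i, ∑ j ∈ univ.filter (fun j => i < j),
          ((ρ * ((A i - A j) * (A i - A j))).trace - ((ρ * (A i - A j)).trace)^2) := by
  set t : Fin N → ℂ := fun i => (ρ * A i).trace with htdef
  set c : Fin N → Fin N → ℂ := fun i j => (ρ * (A i * A j)).trace - t i * t j with hcdef
  have hdiag : ∀ i, (ρ * (A i * A i)).trace - ((ρ * A i).trace)^2 = c i i := by
    intro i; simp only [hcdef, htdef]; ring
  have hsum1 : (ρ * ((∑ i, A i) * (∑ i, A i))).trace
      = ∑ i, ∑ j, (ρ * (A i * A j)).trace := by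
    rw [Finset.sum_mul_sum]
    simp [Finset.mul_sum, Matrix.trace_sum]
  have hsum2 : (ρ * ∑ i, A i).trace = ∑ i, t i := by
    simp [Finset.mul_sum, Matrix.trace_sum, htdef]
  have hsum3 : ((ρ * ∑ i, A i).trace)^2 = ∑ i, ∑ j, t i * t j := by
    rw [hsum2, pow_two, Finset.sum_mul_sum]
  have hsum : (ρ * ((∑ i, A i) * (∑ i, A i))).trace - ((ρ * ∑ i, A i).trace)^2
      = ∑ i, ∑ j, c i j := by
    rw [hsum1, hsum3, ← Finset.sum_sub_distrib]
    refine Finset.sum_congr rfl fun i _ => ?_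
    rw [← Finset.sum_sub_distrib]
  have hpair : ∀ i j : Fin N,
      (ρ * ((A i - A j) * (A i - A j))).trace - ((ρ * (A i - A j)).trace)^2
        = c i i + c j j - c i j - c j i := by
    intro i j
    have e1 : (A i - A j) * (A i - A j)
        = A i * A i - A i * A j - A j * A i + A j * A j := by
      rw [sub_mul, mul_sub, mul_sub]; abel
    have e2 : (ρ * (A i - A j)).trace = t i - t j := by
      rw [Matrix.mul_sub, Matrix.trace_sub]
    rw [e1, e2]
    simp only [Matrix.mul_sub, Matrix.mul_add, Matrix.trace_sub, Matrix.trace_add]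
    simp only [hcdef]
    ring
  rw [Finset.sum_congr rfl fun i _ => hdiag i, hsum]
  rw [Finset.sum_congr rfl fun i _ => Finset.sum_congr rfl fun j _ => hpair i j]
  rw [pair_sum_eq c]
  ring

lemma qvar_decomposition {d N : ℕ} (ρ : Matrix (Fin d) (Fin d) ℂ)
    (A : Fin N → Matrix (Fin d) (Fin d) ℂ) :
    (N : ℝ) * ∑ i, qvar ρ (A i)
      = qvar ρ (∑ i, A i)
        + ∑ i, ∑ j ∈ univ.filter (fun j => i < j), qvar ρ (A i - A j) := by
  have h := congrArg Complex.re (decomposition ρ A)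
  have hre : ∀ z : ℂ, ((N : ℂ) * z).re = (N : ℝ) * z.re := by
    intro z; simp [Complex.mul_re]
  simp only [Complex.add_re, Complex.re_sum] at h
  rw [hre] at h
  simp only [Complex.re_sum] at h
  simp only [pow_two] at h
  simp only [qvar, pow_two]
  exact h

theorem song_uncertainty {d N : ℕ} (hN : 2 ≤ N) (ρ : Matrix (Fin d) (Fin d) ℂ)
    (hρ : ρ.PosSemidef) (hρ1 : ρ.trace = 1)
    (A : Fin N → Matrix (Fin d) (Fin d) ℂ) (hA : ∀ i, (A i).IsHermitian) :
    ∑ i, qvar ρ (A i) ≥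
      (1 / (N : ℝ)) * qvar ρ (∑ i, A i) +
      (2 / ((N : ℝ) ^ 2 * ((N : ℝ) - 1))) *
        (∑ i : Fin N, ∑ j ∈ univ.filter (fun j => i < j), qdev ρ (A i - A j)) ^ 2 := by
  have hn2 : (2 : ℝ) ≤ (N : ℝ) := by exact_mod_cast hN
  have hn0 : (0 : ℝ) < (N : ℝ) := by linarith
  set n : ℝ := (N : ℝ) with hn
  set S : ℝ := ∑ i, qvar ρ (A i) with hS
  set V : ℝ := qvar ρ (∑ i, A i) with hV
  set P : ℝ := ∑ i, ∑ j ∈ univ.filter (fun j => i < j), qvar ρ (A i - A j) with hP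
  set T : ℝ := ∑ i : Fin N, ∑ j ∈ univ.filter (fun j => i < j), qdev ρ (A i - A j) with hT
  have hdec : n * S = V + P := qvar_decomposition ρ A
  have hqv : ∀ i j : Fin N, 0 ≤ qvar ρ (A i - A j) :=
    fun i j => qvar_nonneg hρ hρ1 ((hA i).sub (hA j))
  have hPnn : 0 ≤ P :=
    Finset.sum_nonneg fun i _ => Finset.sum_nonneg fun j _ => hqv i j
  -- Cauchy–Schwarz over the sigma finset of pairs
  set s : Finset ((_ : Fin N) × Fin N) :=
    univ.sigma (fun i : Fin N => univ.filter fun j => i < j) with hs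
  have hTs : T = ∑ x ∈ s, qdev ρ (A x.1 - A x.2) := by
    rw [hT, hs, Finset.sum_sigma]
  have hPs : P = ∑ x ∈ s, qdev ρ (A x.1 - A x.2) ^ 2 := by
    rw [hP, hs, Finset.sum_sigma]
    refine Finset.sum_congr rfl fun i _ => Finset.sum_congr rfl fun j _ => ?_
    rw [qdev, Real.sq_sqrt (hqv i j)]
  have hCS : T ^ 2 ≤ (s.card : ℝ) * P := by
    rw [hTs, hPs]
    exact sq_sum_le_card_mul_sum_sq
  -- cardinality of the set of pairs
  have hcard : s.card * 2 = N * (N - 1) := by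
    rw [hs, Finset.card_sigma]
    have e1 : ∀ i : Fin N, (univ.filter fun j => i < j) = Finset.Ioi i := by
      intro i; ext j; simp
    simp only [e1, Fin.card_Ioi]
    rw [Fin.sum_univ_eq_sum_range (fun i => N - 1 - i), Finset.sum_range_reflect (fun i => i) N,
      Finset.sum_range_id_mul_two]
  have hK2 : (s.card : ℝ) * 2 = n * (n - 1) := by
    have := congrArg (fun m : ℕ => (m : ℝ)) hcard
    push_cast [Nat.cast_sub (by omega : 1 ≤ N)] at this
    simpa [hn] using this
  have hpos : (0 : ℝ) < n ^ 2 * (n - 1) := by nlinarith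
  have h1 : (2 / (n ^ 2 * (n - 1))) * T ^ 2 ≤ (2 / (n ^ 2 * (n - 1))) * ((s.card : ℝ) * P) :=
    mul_le_mul_of_nonneg_left hCS (by positivity)
  have h2 : (2 / (n ^ 2 * (n - 1))) * ((s.card : ℝ) * P) = (1 / n) * P := by
    have hn1 : n - 1 ≠ 0 := by linarith
    field_simp
    linear_combination P * hK2
  have hSe : S = (1 / n) * V + (1 / n) * P := by
    field_simp
    linarith [hdec]
  rw [ge_iff_le, hSe]
  linarith [h1, h2]
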